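/- Let k be a field and V, W be k-vector spaces, and endow both L(V) = End_k(V) and L(W) = End_k(W) with the finite topology. Then every continuous (not necessarily unital) ring homomorphism ρ : L(V) → L(W) is either injective or identically zero; equivalently, if the kernel of ρ is nonzero then ρ = 0. -/

import Mathlib

open Filter Topology


/-- The finite topology on `End_k(V)`: the subspace topology induced by the inclusion
`End_k(V) ⊆ (V → V)`, where `V` carries the discrete topology and `V → V` the
product topology. -/
def finiteTopology (k V : Type*) [Field k] [AddCommGroup V] [Module k V] :
    TopologicalSpace (Module.End k V) :=
  TopologicalSpace.induced (fun φ => (φ : V → V))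
    (@Pi.topologicalSpace V (fun _ => V) (fun _ => ⊥))

/-- Density/approximation lemma: if `φ ≠ 0`, then for any `ψ` and any finite set `I`
there is an element `χ` of the two-sided ideal generated by `φ` (explicitly a sum of
terms `a * φ * b`) agreeing with `ψ` on `I`. -/
theorem exists_approx_in_ideal (k V : Type*) [Field k] [AddCommGroup V] [Module k V]
    (φ ψ : Module.End k V) {v₀ : V} (hv₀ : φ v₀ ≠ 0) (I : Set V) (hI : I.Finite) :
    ∃ (n : ℕ) (a b : Fin n → Module.End k V),
      (∀ x ∈ I, (∑ j, a j * φ * b j) x = ψ x) := by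
  classical
  set w₀ : V := φ v₀ with hw₀
  -- dual functional with f w₀ = 1
  obtain ⟨g, hg⟩ : ∃ g : Module.Dual k V, g w₀ ≠ 0 := by
    by_contra h
    push_neg at h
    exact hv₀ ((Module.forall_dual_apply_eq_zero_iff k w₀).mp h)
  set f : Module.Dual k V := (g w₀)⁻¹ • g with hf
  have hf1 : f w₀ = 1 := by simp [hf, inv_mul_cancel₀ hg]
  -- basis of the span of I
  set U : Submodule k V := Submodule.span k I with hU
  haveI : FiniteDimensional k U := FiniteDimensional.span_of_finite k hI
  set n : ℕ := Module.finrank k U with hn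
  set s : Module.Basis (Fin n) k U := Module.finBasis k U with hs
  obtain ⟨U', hcompl⟩ := Submodule.exists_isCompl U
  set π : V →ₗ[k] U := Submodule.projectionOnto U U' hcompl with hπ
  set b : Fin n → Module.End k V :=
    fun j => (LinearMap.toSpanSingleton k V v₀) ∘ₗ (s.coord j) ∘ₗ π with hb
  set a : Fin n → Module.End k V :=
    fun j => (LinearMap.toSpanSingleton k V (ψ (s j))) ∘ₗ f with ha
  refine ⟨n, a, b, ?_⟩
  have hbs : ∀ i j, b j (s i : V) = (if j = i then (1:k) else 0) • v₀ := by
    intro i j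
    simp only [hb, LinearMap.coe_comp, Function.comp_apply, hπ,
      Submodule.projectionOnto_apply_left, LinearMap.toSpanSingleton_apply]
    congr 1
    simp [Module.Basis.coord_apply, Module.Basis.repr_self, Finsupp.single_apply, eq_comm]
  have hbasis : ∀ i, (∑ j, a j * φ * b j) (s i : V) = ψ (s i : V) := by
    intro i
    rw [LinearMap.sum_apply]
    have : ∀ j, (a j * φ * b j) (s i : V)
        = (if j = i then (1:k) else 0) • ψ (s j) := by
      intro j
      show a j (φ (b j (s i : V))) = _
      rw [hbs i j, map_smul, map_smul]
      congr 1
      simp [ha, ← hw₀, hf1]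
    simp only [this]
    simp
  -- agree on the span
  have heq : ∀ x ∈ I, (∑ j, a j * φ * b j) x = ψ x := by
    intro x hx
    have hxU : x ∈ Submodule.span k (Set.range (fun i => (s i : V))) := by
      have : Submodule.span k (Set.range (fun i => (s i : V))) = U := by
        have : Set.range (fun i => (s i : V)) = ⇑U.subtype '' Set.range s := by
          rw [← Set.range_comp]; rfl
        rw [this, Submodule.span_image, s.span_eq, Submodule.map_subtype_top]
      rw [this]
      exact Submodule.subset_span hx
    refine LinearMap.eqOn_span ?_ hxU
    rintro - ⟨i, rfl⟩
    exact hbasis i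
  exact heq

/-- Every continuous (not necessarily unital) ring homomorphism
`ρ : L(V) → L(W)` between endomorphism rings equipped with their finite topologies
is either injective or identically zero. -/
theorem continuous_ringHom_endomorphism_injective_or_zero
    (k V W : Type*) [Field k] [AddCommGroup V] [Module k V] [AddCommGroup W] [Module k W]
    (ρ : Module.End k V →ₙ+* Module.End k W)
    (hcont : @Continuous (Module.End k V) (Module.End k W)
      (finiteTopology k V) (finiteTopology k W) ρ) :
    Function.Injective ρ ∨ ρ = 0 := by
  classical
  letI τV : TopologicalSpace (Module.End k V) := finiteTopology k V
  letI τW : TopologicalSpace (Module.End k W) := finiteTopology k W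
  letI : TopologicalSpace V := ⊥
  haveI : DiscreteTopology V := ⟨rfl⟩
  letI : TopologicalSpace W := ⊥
  haveI : DiscreteTopology W := ⟨rfl⟩
  rw [or_iff_not_imp_left]
  intro hinj
  -- produce a nonzero element of the kernel
  obtain ⟨x, y, hxy, hne⟩ : ∃ x y, ρ x = ρ y ∧ x ≠ y := by
    simp only [Function.Injective, not_forall] at hinj
    obtain ⟨x, y, h1, h2⟩ := hinj
    exact ⟨x, y, h1, h2⟩
  set φ : Module.End k V := x - y with hφdef
  have hφ0 : φ ≠ 0 := sub_ne_zero.mpr hne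
  have hρφ : ρ φ = 0 := by rw [hφdef, map_sub, hxy, sub_self]
  obtain ⟨v₀, hv₀⟩ : ∃ v, φ v ≠ 0 := by
    by_contra h
    push_neg at h
    exact hφ0 (LinearMap.ext fun v => h v)
  -- the kernel is closed
  have hker : IsClosed (ρ ⁻¹' {0}) := by
    apply IsClosed.preimage hcont
    have h0 : ({0} : Set (Module.End k W))
        = (fun χ : Module.End k W => (χ : W → W)) ⁻¹' {(0 : W → W)} := by
      ext χ
      simp only [Set.mem_singleton_iff, Set.mem_preimage]
      constructor
      · rintro rfl; rfl
      · intro h; ext w; exact congrFun h w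
    rw [h0]
    exact IsClosed.preimage continuous_induced_dom isClosed_singleton
  -- every ψ lies in the closure of the kernel
  have key : ∀ ψ : Module.End k V, ρ ψ = 0 := by
    intro ψ
    have hcl : ψ ∈ closure (ρ ⁻¹' {0}) := by
      rw [mem_closure_iff_nhds]
      intro t ht
      have hnhds : 𝓝 ψ = Filter.comap (fun χ : Module.End k V => (χ : V → V))
          (𝓝 (ψ : V → V)) := nhds_induced _ _
      rw [hnhds, Filter.mem_comap] at ht
      obtain ⟨t', ht', hsub⟩ := ht
      rw [nhds_pi] at ht'
      have hd := @nhds_discrete V ⊥ ⟨rfl⟩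
      rw [hd] at ht'
      rw [Filter.mem_pi] at ht'
      obtain ⟨I, hIfin, S, hS, hpi⟩ := ht'
      obtain ⟨n, a, b, hab⟩ := exists_approx_in_ideal k V φ ψ hv₀ I hIfin
      set χ : Module.End k V := ∑ j, a j * φ * b j with hχ
      have hχker : ρ χ = 0 := by
        rw [hχ, map_sum]
        apply Finset.sum_eq_zero
        intro j _
        rw [map_mul, map_mul, hρφ, mul_zero, zero_mul]
      refine ⟨χ, hsub ?_, hχker⟩
      apply hpi
      intro i hi
      have := hS i
      rw [Filter.mem_pure] at this
      simpa [hab i hi] using this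
    have := hker.closure_subset hcl
    simpa using this
  ext ψ
  simp [key ψ]
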